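/- If S is a subset of a direct product G × H such that the image of S under the first projection generates G and the image under the second projection generates H, and G and H have coprime orders, then S generates G × H. -/

import Mathlib

theorem stmt_7 {G H : Type*} [Group G] [Group H] [Finite G] [Finite H]
    (hcop : Nat.Coprime (Nat.card G) (Nat.card H))
    (S : Set (G × H))
    (h1 : Subgroup.closure (Prod.fst '' S) = (⊤ : Subgroup G))
    (h2 : Subgroup.closure (Prod.snd '' S) = (⊤ : Subgroup H)) :
    Subgroup.closure S = (⊤ : Subgroup (G × H)) := by
  set K := Subgroup.closure S with hK
  have hmap1 : K.map (MonoidHom.fst G H) = ⊤ := by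
    rw [hK, MonoidHom.map_closure]; exact h1
  have hmap2 : K.map (MonoidHom.snd G H) = ⊤ := by
    rw [hK, MonoidHom.map_closure]; exact h2
  have hd1 : Nat.card G ∣ Nat.card K := by
    have : Function.Surjective ((MonoidHom.fst G H).domRestrict K) := by
      intro g
      have : g ∈ K.map (MonoidHom.fst G H) := hmap1 ▸ Subgroup.mem_top g
      obtain ⟨x, hx, hxg⟩ := this
      exact ⟨⟨x, hx⟩, hxg⟩
    exact Subgroup.card_dvd_of_surjective _ this
  have hd2 : Nat.card H ∣ Nat.card K := by
    have : Function.Surjective ((MonoidHom.snd G H).domRestrict K) := by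
      intro g
      have : g ∈ K.map (MonoidHom.snd G H) := hmap2 ▸ Subgroup.mem_top g
      obtain ⟨x, hx, hxg⟩ := this
      exact ⟨⟨x, hx⟩, hxg⟩
    exact Subgroup.card_dvd_of_surjective _ this
  have hdvd : Nat.card (G × H) ∣ Nat.card K := by
    rw [Nat.card_prod]
    exact hcop.mul_dvd_of_dvd_of_dvd hd1 hd2
  have hdvd2 : Nat.card K ∣ Nat.card (G × H) := Subgroup.card_subgroup_dvd_card K
  exact Subgroup.eq_top_of_card_eq K (Nat.dvd_antisymm hdvd2 hdvd)
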